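/- For natural numbers n and j and complex number a such that (2a+j)_k ≠ 0 for 0 ≤ k ≤ 2n+1, ∑_{k=0}^{2n+1} (-2n-1)_k (a)_k 2^k / ((2a+j)_k k!) = (2^{2n} (3/2)_n / (2a+j)_{2n+1}) · ∑_{r=0}^{⌊j/2⌋} (-1)^r C(j,2r+1) (-n)_r (a+j)_{n-r}, where terms with 2r+1 > j are zero. -/

import Mathlib

open Finset

/-- The Pochhammer symbol (rising factorial) `(x)_k = x (x+1) ⋯ (x+k-1)`. -/
noncomputable def poch (x : ℂ) (k : ℕ) : ℂ := (ascPochhammer ℂ k).eval x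

lemma poch_zero (x : ℂ) : poch x 0 = 1 := by simp [poch]
lemma poch_one (x : ℂ) : poch x 1 = x := by simp [poch]
lemma poch_succ (x : ℂ) (k : ℕ) : poch x (k+1) = poch x k * (x + k) := by
  simp [poch, ascPochhammer_succ_eval]
lemma poch_add (x : ℂ) (i m : ℕ) : poch x (i + m) = poch x i * poch (x + i) m := by
  have := ascPochhammer_mul (S := ℂ) i m
  have h2 := congrArg (Polynomial.eval x) this
  simpa [poch, Polynomial.eval_comp] using h2.symm

lemma poch_vandermonde (x y : ℂ) (M : ℕ) :
    ∑ m ∈ range (M+1), (M.choose m : ℂ) * poch x m * poch y (M - m) = poch (x + y) M := by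
  induction M with
  | zero => simp [poch_zero]
  | succ M ih =>
    rw [Finset.sum_range_succ' _ (M+1)]
    have key : ∀ i ∈ range (M+1), ((M+1).choose (i+1) : ℂ) * poch x (i+1) * poch y (M+1-(i+1))
        = (M.choose i : ℂ) * (poch x i * poch y (M-i)) * (x + i)
          + (M.choose (i+1) : ℂ) * poch x (i+1) * poch y (M+1-(i+1)) := by
      intro i hi
      rw [Nat.choose_succ_succ, Nat.cast_add, poch_succ]
      simp only [Nat.add_sub_add_right]
      ring
    rw [Finset.sum_congr rfl key, Finset.sum_add_distrib]
    have hB : (∑ i ∈ range (M+1), (M.choose (i+1) : ℂ) * poch x (i+1) * poch y (M+1-(i+1)))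
        + ((M+1).choose 0 : ℂ) * poch x 0 * poch y (M+1-0)
        = ∑ m ∈ range (M+1), (M.choose m : ℂ) * (poch x m * poch y (M-m)) * (y + (M - m : ℕ)) := by
      have : (∑ i ∈ range (M+1), (M.choose (i+1) : ℂ) * poch x (i+1) * poch y (M+1-(i+1)))
          + ((M).choose 0 : ℂ) * poch x 0 * poch y (M+1-0)
          = ∑ m ∈ range (M+2), (M.choose m : ℂ) * poch x m * poch y (M+1-m) := by
        rw [Finset.sum_range_succ' (fun m => (M.choose m : ℂ) * poch x m * poch y (M+1-m)) (M+1)]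
      rw [Nat.choose_zero_right] at this ⊢
      rw [this, Finset.sum_range_succ]
      simp only [Nat.choose_succ_self, Nat.cast_zero, zero_mul, add_zero]
      apply Finset.sum_congr rfl
      intro m hm
      rw [mem_range] at hm
      have : M + 1 - m = (M - m) + 1 := by omega
      rw [this, poch_succ]
      ring
    have hfin : ∑ m ∈ range (M+1), (M.choose m : ℂ) * (poch x m * poch y (M-m)) * (x + m)
        + ∑ m ∈ range (M+1), (M.choose m : ℂ) * (poch x m * poch y (M-m)) * (y + (M - m : ℕ))
        = poch (x + y) (M+1) := by
      rw [poch_succ, ← ih, ← Finset.sum_add_distrib, Finset.sum_mul]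
      apply Finset.sum_congr rfl
      intro m hm
      rw [mem_range] at hm
      have hc : ((M - m : ℕ) : ℂ) = (M : ℂ) - m := by
        push_cast [Nat.cast_sub (Nat.le_of_lt_succ hm)]; ring
      rw [hc]; push_cast; ring
    linear_combination hB + hfin


lemma poch_neg_nat (N i : ℕ) : poch (-(N:ℂ)) i = (-1)^i * (N.descFactorial i : ℂ) := by
  rw [poch, ascPochhammer_eval_neg_eq_descPochhammer,
    descPochhammer_eval_eq_descFactorial]

lemma descFactorial_cast (N i : ℕ) (h : i ≤ N) :
    (N.descFactorial i : ℂ) = (N.factorial : ℂ) / ((N-i).factorial : ℂ) := by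
  rw [eq_div_iff (by exact_mod_cast (N-i).factorial_ne_zero), mul_comm]
  exact_mod_cast congrArg (Nat.cast (R := ℂ)) (Nat.factorial_mul_descFactorial h)

-- the Kummer convolution sequence: coefficients of (1-u^2)^{-b}
noncomputable def kc (b : ℂ) (k : ℕ) : ℂ :=
  ∑ q ∈ range (k+1), (-1)^q * poch b q * poch b (k-q) / ((q.factorial : ℂ) * ((k-q).factorial : ℂ))

noncomputable def kd (b : ℂ) (k : ℕ) : ℂ :=
  ∑ q ∈ range (k+1), (q:ℂ) * ((-1)^q * poch b q * poch b (k-q) / ((q.factorial : ℂ) * ((k-q).factorial : ℂ)))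

noncomputable def ke (b : ℂ) (k : ℕ) : ℂ :=
  ∑ q ∈ range (k+1), ((k-q : ℕ):ℂ) * ((-1)^q * poch b q * poch b (k-q) / ((q.factorial : ℂ) * ((k-q).factorial : ℂ)))

lemma kd_add_ke (b : ℂ) (k : ℕ) : kd b k + ke b k = k * kc b k := by
  rw [kd, ke, kc, ← Finset.sum_add_distrib, Finset.mul_sum]
  apply Finset.sum_congr rfl
  intro q hq
  rw [mem_range] at hq
  rw [← add_mul]
  congr 1
  have : ((k - q : ℕ) : ℂ) = (k:ℂ) - q := by
    push_cast [Nat.cast_sub (Nat.lt_succ_iff.mp hq)]; ring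
  rw [this]; ring

lemma kd_succ (b : ℂ) (k : ℕ) : kd b (k+1) = -b * kc b k - kd b k := by
  rw [kd, Finset.sum_range_succ' _ (k+1)]
  simp only [Nat.cast_zero, zero_mul, add_zero]
  rw [kc, kd, Finset.mul_sum, ← Finset.sum_sub_distrib]
  apply Finset.sum_congr rfl
  intro q hq
  rw [mem_range] at hq
  have hq' : q ≤ k := Nat.lt_succ_iff.mp hq
  have h1 : k + 1 - (q+1) = k - q := by omega
  have h2 : poch b (q+1) = poch b q * (b + q) := poch_succ b q
  have h3 : ((q+1).factorial : ℂ) = (q+1) * (q.factorial : ℂ) := by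
    push_cast [Nat.factorial_succ]; ring
  have h4 : ((q+1:ℕ):ℂ) = (q:ℂ)+1 := by push_cast; ring
  rw [h1, h2, h3, h4]
  have hfq : (q.factorial : ℂ) ≠ 0 := by exact_mod_cast q.factorial_ne_zero
  have hfkq : ((k-q).factorial : ℂ) ≠ 0 := by exact_mod_cast (k-q).factorial_ne_zero
  have hq1 : ((q:ℂ)+1) ≠ 0 := Nat.cast_add_one_ne_zero q
  generalize poch b (k-q) = P at *
  generalize ((q:ℂ)) = Q at *
  generalize ((q.factorial:ℂ)) = F at *
  field_simp
  ring

lemma ke_succ (b : ℂ) (k : ℕ) : ke b (k+1) = b * kc b k + ke b k := by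
  rw [ke, Finset.sum_range_succ]
  simp only [Nat.sub_self, Nat.cast_zero, zero_mul, add_zero]
  rw [kc, ke, Finset.mul_sum, ← Finset.sum_add_distrib]
  apply Finset.sum_congr rfl
  intro q hq
  rw [mem_range] at hq
  have hq' : q ≤ k := Nat.lt_succ_iff.mp hq
  have h1 : k + 1 - q = (k - q) + 1 := by omega
  rw [h1, poch_succ]
  have h3 : (((k-q)+1).factorial : ℂ) = (((k-q:ℕ):ℂ)+1) * ((k-q).factorial : ℂ) := by
    push_cast [Nat.factorial_succ]; ring
  have h4 : ((k-q+1:ℕ):ℂ) = ((k-q:ℕ):ℂ)+1 := by push_cast; ring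
  rw [h3, h4]
  have hfq : (q.factorial : ℂ) ≠ 0 := by exact_mod_cast q.factorial_ne_zero
  have hfkq : ((k-q).factorial : ℂ) ≠ 0 := by exact_mod_cast (k-q).factorial_ne_zero
  have hq1 : (((k-q:ℕ):ℂ)+1) ≠ 0 := Nat.cast_add_one_ne_zero (k-q)
  generalize poch b (k-q) = P at *
  generalize ((k-q:ℕ):ℂ) = K at *
  generalize ((k-q).factorial : ℂ) = F at *
  field_simp


lemma kc_rec (b : ℂ) (k : ℕ) : ((k:ℂ)+2) * kc b (k+2) = (2*b + k) * kc b k := by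
  have h1 := kd_succ b (k+1)
  have h2 := ke_succ b (k+1)
  have h3 := kd_succ b k
  have h4 := ke_succ b k
  have h5 := kd_add_ke b (k+2)
  have h6 := kd_add_ke b k
  push_cast at h5
  linear_combination (-1 : ℂ) * h5 + h1 + h2 + h4 - h3 + h6

lemma kc_zero (b : ℂ) : kc b 0 = 1 := by simp [kc, poch_zero]

lemma kc_one (b : ℂ) : kc b 1 = 0 := by
  rw [kc]
  rw [Finset.sum_range_succ, Finset.sum_range_one]
  simp [poch_zero, poch_one]

lemma kc_even (b : ℂ) (m : ℕ) : kc b (2*m) = poch b m / (m.factorial : ℂ) := by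
  induction m with
  | zero => simp [kc_zero, poch_zero]
  | succ m ih =>
    have hrec := kc_rec b (2*m)
    rw [ih] at hrec
    have hcast : ((2*m:ℕ):ℂ) = 2*(m:ℂ) := by push_cast; ring
    rw [hcast] at hrec
    have hidx : 2*(m+1) = 2*m+2 := by ring
    rw [hidx, poch_succ]
    have hne : (2*(m:ℂ)+2) ≠ 0 := by
      have h2 : ((m:ℂ)+1) ≠ 0 := Nat.cast_add_one_ne_zero m
      intro hc; apply h2; linear_combination hc/2
    have hm : (m.factorial:ℂ) ≠ 0 := by exact_mod_cast m.factorial_ne_zero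
    have hm1 : ((m+1).factorial:ℂ) = ((m:ℂ)+1) * m.factorial := by
      push_cast [Nat.factorial_succ]; ring
    have hX : kc b (2*m+2) = (2*b+2*(m:ℂ)) * (poch b m / m.factorial) / (2*(m:ℂ)+2) := by
      rw [eq_div_iff hne]
      linear_combination hrec
    rw [hX, hm1]
    have h2 : ((m:ℂ)+1) ≠ 0 := Nat.cast_add_one_ne_zero m
    field_simp

lemma kc_odd (b : ℂ) (m : ℕ) : kc b (2*m+1) = 0 := by
  induction m with
  | zero => exact kc_one b
  | succ m ih =>
    have h2m : (2*(m+1)+1) = (2*m+1) + 2 := by ring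
    rw [h2m]
    have := kc_rec b (2*m+1)
    rw [ih, mul_zero] at this
    have hne : ((2*m+1 : ℕ):ℂ) + 2 ≠ 0 := by
      have : ((2*m+1 : ℕ):ℂ) + 2 = ((2*m+3 : ℕ):ℂ) := by push_cast; ring
      rw [this]
      exact (Nat.cast_ne_zero (R := ℂ)).mpr (by omega)
    exact (mul_eq_zero.mp this).resolve_left hne

lemma poch_succ_left (x : ℂ) (k : ℕ) : poch x (k+1) = x * poch (x+1) k := by
  have := ascPochhammer_succ_left (S := ℂ) k
  have h2 := congrArg (Polynomial.eval x) this
  simpa [poch, Polynomial.eval_comp] using h2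

lemma poch_reflect (x : ℂ) (r : ℕ) : poch x r = (-1)^r * poch (1 - r - x) r := by
  induction r generalizing x with
  | zero => simp [poch_zero]
  | succ r ih =>
    rw [poch_succ, ih]
    have h2 : ((r+1 : ℕ):ℂ) = (r:ℂ)+1 := by push_cast; ring
    rw [h2, poch_succ_left (1 - ((r:ℂ)+1) - x) r]
    have h1 : (1 - ((r:ℂ)+1) - x) + 1 = 1 - r - x := by ring
    rw [h1]
    ring

lemma choose_cast_eq (M m : ℕ) (h : m ≤ M) :
    (M.choose m : ℂ) = (M.factorial : ℂ) / ((m.factorial : ℂ) * ((M-m).factorial : ℂ)) := by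
  rw [eq_div_iff (mul_ne_zero (by exact_mod_cast m.factorial_ne_zero)
    (by exact_mod_cast (M-m).factorial_ne_zero)), ← mul_assoc]
  exact_mod_cast congrArg (Nat.cast (R := ℂ)) (Nat.choose_mul_factorial_mul_factorial h)

lemma signed_vandermonde (β γ : ℂ) (M : ℕ) :
    ∑ m ∈ range (M+1), (-1)^m * (M.choose m : ℂ) * poch β m * poch (γ + m) (M-m)
      = poch (γ - β) M := by
  have step : ∀ m ∈ range (M+1),
      (-1)^m * (M.choose m : ℂ) * poch β m * poch (γ + m) (M-m)
      = (-1)^M * ((M.choose m : ℂ) * poch β m * poch (1 - M - γ) (M-m)) := by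
    intro m hm
    rw [mem_range, Nat.lt_succ_iff] at hm
    rw [poch_reflect (γ + m) (M-m)]
    have hc : ((M - m : ℕ):ℂ) = (M:ℂ) - m := by push_cast [Nat.cast_sub hm]; ring
    rw [hc]
    have h1 : (1 : ℂ) - ((M:ℂ) - m) - (γ + m) = 1 - M - γ := by ring
    rw [h1]
    have hpow : ((-1:ℂ))^m * (-1:ℂ)^(M-m) = (-1)^M := by
      rw [← pow_add]
      congr 1
      omega
    calc (-1)^m * (M.choose m : ℂ) * poch β m * ((-1)^(M-m) * poch (1 - ↑M - γ) (M - m))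
        = ((-1:ℂ))^m * (-1)^(M-m) * ((M.choose m : ℂ) * poch β m * poch (1 - ↑M - γ) (M - m)) := by ring
      _ = (-1)^M * ((M.choose m : ℂ) * poch β m * poch (1 - ↑M - γ) (M-m)) := by rw [hpow]
  rw [Finset.sum_congr rfl step, ← Finset.mul_sum]
  have hvdm : ∑ m ∈ range (M+1), (M.choose m : ℂ) * poch β m * poch (1 - M - γ) (M-m)
      = poch (β + (1 - M - γ)) M := poch_vandermonde β (1 - M - γ) M
  rw [hvdm]
  have h2 : β + (1 - ↑M - γ) = 1 - ↑M - (γ - β) := by ring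
  rw [h2, ← poch_reflect (γ - β) M]

lemma chu (M : ℕ) (β γ : ℂ) (hγ : ∀ m ≤ M, poch γ m ≠ 0) :
    ∑ m ∈ range (M+1), poch (-(M:ℂ)) m * poch β m / (poch γ m * (m.factorial : ℂ))
      = poch (γ - β) M / poch γ M := by
  have step : ∀ m ∈ range (M+1),
      poch (-(M:ℂ)) m * poch β m / (poch γ m * (m.factorial : ℂ))
      = (-1)^m * (M.choose m : ℂ) * poch β m * poch (γ + m) (M-m) / poch γ M := by
    intro m hm
    rw [mem_range, Nat.lt_succ_iff] at hm
    have hsplit : poch γ M = poch γ m * poch (γ + m) (M - m) := by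
      rw [← poch_add]
      congr 1
      omega
    have h1 : poch γ m ≠ 0 := hγ m hm
    have h2 : poch (γ + m) (M - m) ≠ 0 := by
      intro hc
      apply hγ M le_rfl
      rw [hsplit, hc, mul_zero]
    rw [poch_neg_nat, descFactorial_cast M m hm, choose_cast_eq M m hm, hsplit]
    have hf1 : ((m.factorial : ℂ)) ≠ 0 := by exact_mod_cast m.factorial_ne_zero
    have hf2 : (((M-m).factorial : ℂ)) ≠ 0 := by exact_mod_cast (M-m).factorial_ne_zero
    field_simp
  rw [Finset.sum_congr rfl step, ← Finset.sum_div, signed_vandermonde]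

lemma sum_range_even_odd (m : ℕ) (g : ℕ → ℂ) :
    ∑ p ∈ range (2*m), g p = ∑ r ∈ range m, (g (2*r) + g (2*r+1)) := by
  induction m with
  | zero => simp
  | succ m ih =>
    have : 2*(m+1) = (2*m) + 1 + 1 := by ring
    rw [this, Finset.sum_range_succ, Finset.sum_range_succ, ih, Finset.sum_range_succ]
    ring

lemma two_pow_poch_three_half (n : ℕ) :
    (2:ℂ)^(2*n) * poch (3/2) n * (n.factorial : ℂ) = ((2*n+1).factorial : ℂ) := by
  induction n with
  | zero => simp [poch_zero]
  | succ n ih =>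
    have h1 : 2*(n+1) = 2*n + 2 := by ring
    rw [h1, poch_succ, Nat.factorial_succ]
    have h2 : (2*n+2+1) = (2*n+1+1)+1 := by ring
    rw [h2, Nat.factorial_succ, Nat.factorial_succ]
    push_cast
    push_cast at ih
    ring_nf
    ring_nf at ih
    linear_combination (4 * (n:ℂ)^2 + 10*n + 6) * ih

lemma descF_div_factorial (j p : ℕ) :
    (j.descFactorial p : ℂ) / (p.factorial : ℂ) = (j.choose p : ℂ) := by
  rw [div_eq_iff (by exact_mod_cast p.factorial_ne_zero : (p.factorial:ℂ) ≠ 0)]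
  exact_mod_cast congrArg (Nat.cast (R := ℂ))
    ((Nat.descFactorial_eq_factorial_mul_choose j p).trans (Nat.mul_comm _ _))

lemma L4 (b : ℂ) (j N : ℕ) :
    ∑ i ∈ range (N+1), (-1)^i * poch (b - j) i * poch b (N-i)
        / ((i.factorial : ℂ) * ((N-i).factorial : ℂ))
      = ∑ p ∈ range (N+1), (j.choose p : ℂ) * kc b (N-p) := by
  have expand : ∀ i ∈ range (N+1),
      (-1:ℂ)^i * poch (b - j) i * poch b (N-i) / ((i.factorial : ℂ) * ((N-i).factorial : ℂ))
      = ∑ p ∈ range (N+1), (-1:ℂ)^i * ((i.choose p : ℂ) * poch (-(j:ℂ)) p * poch b (i-p))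
          * poch b (N-i) / ((i.factorial : ℂ) * ((N-i).factorial : ℂ)) := by
    intro i hi
    rw [mem_range, Nat.lt_succ_iff] at hi
    have hv : poch (b - j) i = ∑ p ∈ range (i+1),
        (i.choose p : ℂ) * poch (-(j:ℂ)) p * poch b (i-p) := by
      have := poch_vandermonde (-(j:ℂ)) b i
      rw [show (-(j:ℂ) + b) = b - j by ring] at this
      exact this.symm
    rw [hv, Finset.mul_sum, Finset.sum_mul, Finset.sum_div]
    rw [Finset.sum_subset (Finset.range_subset_range.mpr (by omega : i+1 ≤ N+1))]
    intro p hp hp2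
    rw [mem_range] at hp
    rw [mem_range, Nat.lt_succ_iff, not_le] at hp2
    rw [Nat.choose_eq_zero_of_lt hp2]
    simp
  rw [Finset.sum_congr rfl expand, Finset.sum_comm]
  apply Finset.sum_congr rfl
  intro p hp
  rw [mem_range, Nat.lt_succ_iff] at hp
  -- drop terms i < p
  rw [Finset.range_eq_Ico,
    ← Finset.sum_Ico_consecutive _ (Nat.zero_le p) (by omega : p ≤ N+1)]
  have hzero : ∑ i ∈ Finset.Ico 0 p,
      (-1:ℂ)^i * ((i.choose p : ℂ) * poch (-(j:ℂ)) p * poch b (i-p))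
        * poch b (N-i) / ((i.factorial : ℂ) * ((N-i).factorial : ℂ)) = 0 := by
    apply Finset.sum_eq_zero
    intro i hi
    rw [Finset.mem_Ico] at hi
    rw [Nat.choose_eq_zero_of_lt hi.2]
    simp
  rw [hzero, zero_add, Finset.sum_Ico_eq_sum_range]
  have hNp : N + 1 - p = (N-p) + 1 := by omega
  rw [hNp, kc, Finset.mul_sum]
  apply Finset.sum_congr rfl
  intro q hq
  rw [mem_range, Nat.lt_succ_iff] at hq
  have h1 : p + q - p = q := by omega
  have h2 : N - (p + q) = (N-p) - q := by omega
  have hc : (((p+q).factorial : ℂ)) = ((p+q).choose p : ℂ) * (p.factorial : ℂ) * (q.factorial : ℂ) := by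
    have := choose_cast_eq (p+q) p (Nat.le_add_right p q)
    rw [h1] at this
    rw [this]
    have hfp : ((p.factorial : ℂ)) ≠ 0 := by exact_mod_cast p.factorial_ne_zero
    have hfq : ((q.factorial : ℂ)) ≠ 0 := by exact_mod_cast q.factorial_ne_zero
    field_simp
  have hcomb : (-1:ℂ)^(p+q) * poch (-(j:ℂ)) p = (-1)^q * ((j.choose p : ℂ) * (p.factorial : ℂ)) := by
    rw [poch_neg_nat]
    have hfp' : ((p.factorial : ℂ)) ≠ 0 := by exact_mod_cast p.factorial_ne_zero
    have hd : (j.descFactorial p : ℂ) = (j.choose p : ℂ) * (p.factorial : ℂ) := by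
      rw [← descF_div_factorial j p, div_mul_cancel₀ _ hfp']
    rw [hd, ← mul_assoc, ← pow_add]
    have h3 : p + q + p = 2*p + q := by omega
    rw [h3, pow_add, pow_mul]
    norm_num
  rw [h1, h2, hc]
  have hC1 : (((p+q).choose p : ℂ)) ≠ 0 := by
    exact_mod_cast Nat.ne_of_gt (Nat.choose_pos (Nat.le_add_right p q))
  have hfp : ((p.factorial : ℂ)) ≠ 0 := by exact_mod_cast p.factorial_ne_zero
  have hfq : ((q.factorial : ℂ)) ≠ 0 := by exact_mod_cast q.factorial_ne_zero
  have hfz : ((((N-p)-q).factorial : ℂ)) ≠ 0 := by exact_mod_cast ((N-p)-q).factorial_ne_zero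
  rw [← mul_div_assoc ((j.choose p : ℂ))]
  rw [div_eq_div_iff (by exact mul_ne_zero (mul_ne_zero (mul_ne_zero hC1 hfp) hfq) hfz)
    (by exact mul_ne_zero hfq hfz)]
  linear_combination (((p+q).choose p : ℂ) * poch b q * poch b ((N-p)-q)
    * (q.factorial : ℂ) * (((N-p)-q).factorial : ℂ)) * hcomb

lemma stageA (N j : ℕ) (a : ℂ) (hc : ∀ k ≤ N, poch (2*a+j) k ≠ 0) :
    ∑ k ∈ range (N+1), poch (-(N:ℂ)) k * poch a k * 2^k
        / (poch (2*a+j) k * (k.factorial : ℂ))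
      = (N.factorial : ℂ) / poch (2*a+j) N *
          ∑ i ∈ range (N+1), (-1)^i * poch a i * poch (a+j) (N-i)
            / ((i.factorial : ℂ) * ((N-i).factorial : ℂ)) := by
  set c : ℂ := 2*a+j with hcdef
  have expand : ∀ k ∈ range (N+1),
      poch (-(N:ℂ)) k * poch a k * 2^k / (poch c k * (k.factorial : ℂ))
      = ∑ i ∈ range (N+1), poch (-(N:ℂ)) k * poch a k * (k.choose i : ℂ)
          / (poch c k * (k.factorial : ℂ)) := by
    intro k hk
    rw [mem_range, Nat.lt_succ_iff] at hk
    have h2k : (2:ℂ)^k = ∑ i ∈ range (k+1), (k.choose i : ℂ) := by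
      have := Nat.sum_range_choose k
      have h2 := congrArg (Nat.cast (R := ℂ)) this
      push_cast at h2
      rw [h2]
    rw [h2k, Finset.mul_sum, Finset.sum_div]
    rw [Finset.sum_subset (Finset.range_subset_range.mpr (by omega : k+1 ≤ N+1))]
    intro i hi hi2
    rw [mem_range, Nat.lt_succ_iff, not_le] at hi2
    rw [Nat.choose_eq_zero_of_lt hi2]
    simp
  rw [Finset.sum_congr rfl expand, Finset.sum_comm, Finset.mul_sum]
  apply Finset.sum_congr rfl
  intro i hi
  rw [mem_range, Nat.lt_succ_iff] at hi
  rw [Finset.range_eq_Ico,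
    ← Finset.sum_Ico_consecutive _ (Nat.zero_le i) (by omega : i ≤ N+1)]
  have hzero : ∑ k ∈ Finset.Ico 0 i,
      poch (-(N:ℂ)) k * poch a k * (k.choose i : ℂ) / (poch c k * (k.factorial : ℂ)) = 0 := by
    apply Finset.sum_eq_zero
    intro k hk
    rw [Finset.mem_Ico] at hk
    rw [Nat.choose_eq_zero_of_lt hk.2]
    simp
  rw [hzero, zero_add, Finset.sum_Ico_eq_sum_range]
  have hNi : N + 1 - i = (N-i) + 1 := by omega
  rw [hNi]
  have hstep : ∀ m ∈ range ((N-i)+1),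
      poch (-(N:ℂ)) (i+m) * poch a (i+m) * ((i+m).choose i : ℂ)
        / (poch c (i+m) * ((i+m).factorial : ℂ))
      = (poch (-(N:ℂ)) i * poch a i / (poch c i * (i.factorial : ℂ)))
          * (poch (-((N-i:ℕ):ℂ)) m * poch (a+i) m / (poch (c+i) m * (m.factorial : ℂ))) := by
    intro m hm
    rw [mem_range, Nat.lt_succ_iff] at hm
    have hpm : poch (-(N:ℂ)) (i+m) = poch (-(N:ℂ)) i * poch (-(N:ℂ)+i) m := poch_add _ i m
    have hpa : poch a (i+m) = poch a i * poch (a+i) m := poch_add a i m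
    have hpc : poch c (i+m) = poch c i * poch (c+i) m := poch_add c i m
    have hfact : (((i+m).factorial : ℂ)) = ((i+m).choose i : ℂ) * (i.factorial : ℂ) * (m.factorial : ℂ) := by
      have := choose_cast_eq (i+m) i (Nat.le_add_right i m)
      rw [Nat.add_sub_cancel_left] at this
      rw [this]
      have hfi : ((i.factorial : ℂ)) ≠ 0 := by exact_mod_cast i.factorial_ne_zero
      have hfm : ((m.factorial : ℂ)) ≠ 0 := by exact_mod_cast m.factorial_ne_zero
      field_simp
    have hneg : (-(N:ℂ)+i) = -((N-i:ℕ):ℂ) := by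
      push_cast [Nat.cast_sub hi]
      ring
    rw [hpm, hpa, hpc, hfact, hneg]
    have hC : (((i+m).choose i : ℂ)) ≠ 0 := by
      exact_mod_cast Nat.ne_of_gt (Nat.choose_pos (Nat.le_add_right i m))
    have hfi : ((i.factorial : ℂ)) ≠ 0 := by exact_mod_cast i.factorial_ne_zero
    have hfm : ((m.factorial : ℂ)) ≠ 0 := by exact_mod_cast m.factorial_ne_zero
    have hci : poch c i ≠ 0 := hc i hi
    have hcim : poch (c+i) m ≠ 0 := by
      intro hz
      apply hc (i+m) (by omega)
      rw [hpc, hz, mul_zero]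
    field_simp
  rw [Finset.sum_congr rfl hstep, ← Finset.mul_sum]
  have hchu := chu (N-i) (a+i) (c+i) ?hγ
  case hγ =>
    intro m hm
    intro hz
    apply hc (i+m) (by omega)
    rw [poch_add c i m, hz, mul_zero]
  rw [hchu]
  have hba : (c+(i:ℂ)) - (a+(i:ℂ)) = a + j := by rw [hcdef]; ring
  rw [hba]
  have hsplit : poch c N = poch c i * poch (c+i) (N-i) := by
    rw [← poch_add]
    congr 1
    omega
  have hnegi : poch (-(N:ℂ)) i = (-1)^i * (N.factorial : ℂ) / ((N-i).factorial : ℂ) := by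
    rw [poch_neg_nat, descFactorial_cast N i hi]
    ring
  rw [hnegi, hsplit]
  have hci : poch c i ≠ 0 := hc i hi
  have hcim : poch (c+i) (N-i) ≠ 0 := by
    intro hz
    apply hc N le_rfl
    rw [hsplit, hz, mul_zero]
  have hfi : ((i.factorial : ℂ)) ≠ 0 := by exact_mod_cast i.factorial_ne_zero
  have hfni : (((N-i).factorial : ℂ)) ≠ 0 := by exact_mod_cast (N-i).factorial_ne_zero
  field_simp

theorem twoF1_neg2np1_a_twoApj (n j : ℕ) (a : ℂ)
    (h : ∀ k ≤ 2 * n + 1, poch (2 * a + j) k ≠ 0) :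
    ∑ k ∈ range (2 * n + 2),
        poch (-(2 * n : ℂ) - 1) k * poch a k * 2 ^ k /
          (poch (2 * a + j) k * (k.factorial : ℂ))
      = (2 : ℂ) ^ (2 * n) * poch (3 / 2) n / poch (2 * a + j) (2 * n + 1) *
          ∑ r ∈ range (j / 2 + 1),
            (-1 : ℂ) ^ r * (j.choose (2 * r + 1) : ℂ) * poch (-(n : ℂ)) r *
              poch (a + j) (n - r) := by
  set N : ℕ := 2*n+1 with hN
  set c : ℂ := 2*a+j with hcdef
  set b : ℂ := a+j with hbdef
  have hneg : (-(2 * (n:ℂ)) - 1) = -((N:ℕ):ℂ) := by rw [hN]; push_cast; ring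
  have hrange : 2*n+2 = N+1 := by omega
  -- left side
  have hL : ∑ k ∈ range (2 * n + 2),
      poch (-(2 * n : ℂ) - 1) k * poch a k * 2 ^ k / (poch c k * (k.factorial : ℂ))
      = (N.factorial : ℂ) / poch c N *
        ∑ p ∈ range (N+1), (j.choose p : ℂ) * kc b (N-p) := by
    rw [hrange]
    have e1 : ∀ k ∈ range (N+1),
        poch (-(2 * (n:ℂ)) - 1) k * poch a k * 2 ^ k / (poch c k * (k.factorial : ℂ))
        = poch (-((N:ℕ):ℂ)) k * poch a k * 2 ^ k / (poch c k * (k.factorial : ℂ)) := by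
      intro k _
      rw [hneg]
    rw [Finset.sum_congr rfl e1, stageA N j a h]
    congr 1
    have e2 : ∀ i ∈ range (N+1),
        (-1:ℂ)^i * poch a i * poch (a+(j:ℂ)) (N-i) / ((i.factorial : ℂ) * ((N-i).factorial : ℂ))
        = (-1:ℂ)^i * poch (b - j) i * poch b (N-i) / ((i.factorial : ℂ) * ((N-i).factorial : ℂ)) := by
      intro i _
      rw [hbdef]
      congr 3
      ring
    rw [Finset.sum_congr rfl e2, L4 b j N]
  rw [hL]
  -- reduce the kc sum to odd terms
  have hsum1 : ∑ p ∈ range (N+1), (j.choose p : ℂ) * kc b (N-p)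
      = ∑ r ∈ range (n+1), (j.choose (2*r+1) : ℂ) * poch b (n-r) / ((n-r).factorial : ℂ) := by
    have hNN : N + 1 = 2*(n+1) := by omega
    rw [hNN, sum_range_even_odd (n+1) (fun p => (j.choose p : ℂ) * kc b (N-p))]
    apply Finset.sum_congr rfl
    intro r hr
    rw [mem_range, Nat.lt_succ_iff] at hr
    have hodd : N - 2*r = 2*(n-r)+1 := by omega
    have heven : N - (2*r+1) = 2*(n-r) := by omega
    rw [hodd, heven, kc_odd, kc_even]
    simp [mul_div_assoc]
  rw [hsum1]
  -- right side
  have hfn : ((n.factorial : ℂ)) ≠ 0 := by exact_mod_cast n.factorial_ne_zero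
  have hK : (2:ℂ)^(2*n) * poch (3/2) n = (N.factorial : ℂ) / (n.factorial : ℂ) := by
    rw [eq_div_iff hfn, hN]
    exact two_pow_poch_three_half n
  rw [hK]
  have hS2 : ∑ r ∈ range (j/2+1),
      (-1:ℂ)^r * (j.choose (2*r+1) : ℂ) * poch (-(n:ℂ)) r * poch b (n-r)
      = ∑ r ∈ range (j/2+1),
        (j.choose (2*r+1) : ℂ) * (n.descFactorial r : ℂ) * poch b (n-r) := by
    apply Finset.sum_congr rfl
    intro r _
    rw [poch_neg_nat]
    have hrr : (-1:ℂ)^r * (-1)^r = 1 := by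
      rw [← pow_add, show r + r = 2*r by omega, pow_mul]
      norm_num
    linear_combination ((j.choose (2*r+1) : ℂ) * (n.descFactorial r : ℂ) * poch b (n-r)) * hrr
  rw [hS2]
  have hext : ∑ r ∈ range (j/2+1),
      (j.choose (2*r+1) : ℂ) * (n.descFactorial r : ℂ) * poch b (n-r)
      = (n.factorial : ℂ) * ∑ r ∈ range (n+1),
        (j.choose (2*r+1) : ℂ) * poch b (n-r) / ((n-r).factorial : ℂ) := by
    rw [Finset.sum_subset (Finset.range_subset_range.mpr (by omega : j/2+1 ≤ n+j/2+2))
      (by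
        intro r hr hr2
        rw [mem_range, Nat.lt_succ_iff, not_le] at hr2
        rw [Nat.choose_eq_zero_of_lt (by omega : j < 2*r+1)]
        simp)]
    rw [← Finset.sum_subset (Finset.range_subset_range.mpr (by omega : n+1 ≤ n+j/2+2))
      (by
        intro r hr hr2
        rw [mem_range, Nat.lt_succ_iff, not_le] at hr2
        rw [Nat.descFactorial_eq_zero_iff_lt.mpr hr2]
        simp : ∀ x ∈ range (n+j/2+2), x ∉ range (n+1) →
          (j.choose (2*x+1) : ℂ) * (n.descFactorial x : ℂ) * poch b (n-x) = 0)]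
    rw [Finset.mul_sum]
    apply Finset.sum_congr rfl
    intro r hr
    rw [mem_range, Nat.lt_succ_iff] at hr
    rw [descFactorial_cast n r hr]
    have hfnr : (((n-r).factorial : ℂ)) ≠ 0 := by exact_mod_cast (n-r).factorial_ne_zero
    field_simp
  rw [hext]
  have hP : poch c N ≠ 0 := h N le_rfl
  field_simp
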